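/- Fix M ∈ ℕ, parameters α_i > 0 and β_i > 0 for i = 1,…,M, vectors l_s, l_t ∈ ℝ^M with nonnegative entries, and constants ε ≥ 0, P ≥ 0. Define C = { z̄ ∈ ℝ^M : Σ_i l_{t,i}·z̄_i ≤ √ε, Σ_i ν_{α_i,β_i}(z̄_i)² ≤ P, 0 ≤ z̄_i ≤ α_i/(2√β_i) } and D = { r ∈ ℝ^M : (Σ_i l_{t,i}·g_{α_i,β_i}(r_i))² ≤ ε, Σ_i r_i² ≤ P, 0 ≤ r_i ≤ 1/√β_i }. Then the supremum of Σ_i l_{s,i}·g_{α_i,β_i}(r_i) over r ∈ D equals the supremum of Σ_i l_{s,i}·z̄_i over z̄ ∈ C; indeed, the componentwise map r ↦ (g_{α_1,β_1}(r_1),…,g_{α_M,β_M}(r_M)) is a bijection from D onto C that identifies the two objectives. -/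

import Mathlib

/-- The Saleh amplitude function `g_{α,β}(r) = α·r/(1 + β·r²)`. -/
noncomputable def salehAmp (α β r : ℝ) : ℝ := α * r / (1 + β * r ^ 2)

/-- The inverse `ν_{α,β}` of the Saleh amplitude function on `[0, 1/√β]`:
`ν(z) = (α − √(α² − 4βz²))/(2βz)` for `z ≠ 0` and `ν(0) = 0`. -/
noncomputable def salehInv (α β z : ℝ) : ℝ :=
  if z = 0 then 0 else (α - Real.sqrt (α ^ 2 - 4 * β * z ^ 2)) / (2 * β * z)

/-- The feasible set `C` of the transformed beamforming problem (19). -/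
def feasC (M : ℕ) (α β lt : Fin M → ℝ) (ε P : ℝ) : Set (Fin M → ℝ) :=
  {z | (∑ i, lt i * z i) ≤ Real.sqrt ε ∧
       (∑ i, (salehInv (α i) (β i) (z i)) ^ 2) ≤ P ∧
       ∀ i, 0 ≤ z i ∧ z i ≤ α i / (2 * Real.sqrt (β i))}

/-- The feasible set `D` of the original amplitude problem (17). -/
noncomputable def feasD (M : ℕ) (α β lt : Fin M → ℝ) (ε P : ℝ) : Set (Fin M → ℝ) :=
  {r | (∑ i, lt i * salehAmp (α i) (β i) (r i)) ^ 2 ≤ ε ∧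
       (∑ i, (r i) ^ 2) ≤ P ∧
       ∀ i, 0 ≤ r i ∧ r i ≤ 1 / Real.sqrt (β i)}

lemma amp_nonneg {α β : ℝ} (hα : 0 < α) (hβ : 0 < β) {r : ℝ} (h0 : 0 ≤ r) :
    0 ≤ salehAmp α β r := by
  unfold salehAmp; positivity

lemma amp_le {α β : ℝ} (hα : 0 < α) (hβ : 0 < β) {r : ℝ} (h0 : 0 ≤ r) :
    salehAmp α β r ≤ α / (2 * Real.sqrt β) := by
  obtain ⟨c, hc0, rfl⟩ : ∃ c, 0 < c ∧ c ^ 2 = β :=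
    ⟨Real.sqrt β, Real.sqrt_pos.mpr hβ, Real.sq_sqrt hβ.le⟩
  rw [Real.sqrt_sq hc0.le]
  have hd : 0 < 1 + c ^ 2 * r ^ 2 := by positivity
  rw [salehAmp, div_le_div_iff₀ hd (by positivity)]
  nlinarith [mul_nonneg hα.le (sq_nonneg (1 - c * r))]

lemma inv_amp {α β : ℝ} (hα : 0 < α) (hβ : 0 < β) {r : ℝ} (h0 : 0 ≤ r)
    (h1 : r ≤ 1 / Real.sqrt β) : salehInv α β (salehAmp α β r) = r := by
  obtain ⟨c, hc0, rfl⟩ : ∃ c, 0 < c ∧ c ^ 2 = β :=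
    ⟨Real.sqrt β, Real.sqrt_pos.mpr hβ, Real.sq_sqrt hβ.le⟩
  rw [Real.sqrt_sq hc0.le] at h1
  have hcr : c * r ≤ 1 := by
    have := mul_le_mul_of_nonneg_left h1 hc0.le
    calc c * r ≤ c * (1 / c) := this
      _ = 1 := by field_simp
  have hbr : c ^ 2 * r ^ 2 ≤ 1 := by nlinarith [mul_nonneg hc0.le h0]
  have hd : 0 < 1 + c ^ 2 * r ^ 2 := by positivity
  rcases eq_or_lt_of_le h0 with h | h
  · simp [salehAmp, salehInv, ← h]
  · have hz : salehAmp α (c ^ 2) r ≠ 0 := by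
      have : 0 < salehAmp α (c ^ 2) r := by unfold salehAmp; positivity
      exact this.ne'
    rw [salehInv, if_neg hz, salehAmp]
    have hkey : α ^ 2 - 4 * c ^ 2 * (α * r / (1 + c ^ 2 * r ^ 2)) ^ 2
        = (α * (1 - c ^ 2 * r ^ 2) / (1 + c ^ 2 * r ^ 2)) ^ 2 := by
      field_simp; ring
    rw [hkey, Real.sqrt_sq (div_nonneg (by nlinarith) hd.le)]
    field_simp
    ring

lemma inv_spec {α β : ℝ} (hα : 0 < α) (hβ : 0 < β) {z : ℝ} (h0 : 0 ≤ z)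
    (h1 : z ≤ α / (2 * Real.sqrt β)) :
    0 ≤ salehInv α β z ∧ salehInv α β z ≤ 1 / Real.sqrt β ∧
      salehAmp α β (salehInv α β z) = z := by
  obtain ⟨c, hc0, rfl⟩ : ∃ c, 0 < c ∧ c ^ 2 = β :=
    ⟨Real.sqrt β, Real.sqrt_pos.mpr hβ, Real.sq_sqrt hβ.le⟩
  rw [Real.sqrt_sq hc0.le] at h1 ⊢
  rcases eq_or_lt_of_le h0 with h | hz0
  · simp only [salehInv, salehAmp, ← h]
    norm_num
    positivity
  · have hA : z * (2 * c) ≤ α := (le_div_iff₀ (by positivity)).mp h1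
    have h4 : 4 * c ^ 2 * z ^ 2 ≤ α ^ 2 := by
      nlinarith [mul_le_mul hA hA (by positivity : (0:ℝ) ≤ z * (2 * c)) hα.le]
    set s := Real.sqrt (α ^ 2 - 4 * c ^ 2 * z ^ 2) with hs_def
    have hs0 : 0 ≤ s := Real.sqrt_nonneg _
    have hs2 : s ^ 2 = α ^ 2 - 4 * c ^ 2 * z ^ 2 := Real.sq_sqrt (by linarith)
    have hsle : s ≤ α := by nlinarith
    have has : 0 < α + s := by linarith
    have hnu : salehInv α (c ^ 2) z = 2 * z / (α + s) := by
      rw [salehInv, if_neg hz0.ne']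
      rw [div_eq_div_iff (by positivity) has.ne']
      nlinarith
    refine ⟨by rw [hnu]; positivity, ?_, ?_⟩
    · rw [hnu, div_le_div_iff₀ has hc0]
      nlinarith
    · rw [hnu, salehAmp, div_eq_iff]
      · field_simp
        linear_combination (-1 : ℝ) * hs2
      · positivity

/-- the suprema of the two problems agree: the componentwise Saleh
map is a bijection of `D` onto `C` identifying the objectives. -/
theorem transformed_problem_equivalence (M : ℕ) (α β ls lt : Fin M → ℝ)
    (hα : ∀ i, 0 < α i) (hβ : ∀ i, 0 < β i)
    (hls : ∀ i, 0 ≤ ls i) (hlt : ∀ i, 0 ≤ lt i)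
    (ε P : ℝ) (hε : 0 ≤ ε) (hP : 0 ≤ P) :
    sSup ((fun r : Fin M → ℝ => ∑ i, ls i * salehAmp (α i) (β i) (r i)) ''
        feasD M α β lt ε P) =
      sSup ((fun z : Fin M → ℝ => ∑ i, ls i * z i) '' feasC M α β lt ε P) ∧
    Set.BijOn (fun (r : Fin M → ℝ) (i : Fin M) => salehAmp (α i) (β i) (r i))
      (feasD M α β lt ε P) (feasC M α β lt ε P) ∧
    ∀ r ∈ feasD M α β lt ε P,
      (∑ i, ls i * salehAmp (α i) (β i) (r i)) =
        ∑ i, ls i * (fun i => salehAmp (α i) (β i) (r i)) i := by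
  have hmaps : Set.MapsTo (fun (r : Fin M → ℝ) (i : Fin M) => salehAmp (α i) (β i) (r i))
      (feasD M α β lt ε P) (feasC M α β lt ε P) := by
    rintro r ⟨h1, h2, h3⟩
    refine ⟨?_, ?_, fun i =>
      ⟨amp_nonneg (hα i) (hβ i) (h3 i).1, amp_le (hα i) (hβ i) (h3 i).1⟩⟩
    · have hnn : 0 ≤ ∑ i, lt i * salehAmp (α i) (β i) (r i) :=
        Finset.sum_nonneg fun i _ => mul_nonneg (hlt i) (amp_nonneg (hα i) (hβ i) (h3 i).1)
      exact (Real.le_sqrt hnn hε).mpr h1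
    · have heq : ∀ i ∈ Finset.univ, salehInv (α i) (β i) (salehAmp (α i) (β i) (r i)) ^ 2
          = r i ^ 2 := fun i _ => by
        rw [inv_amp (hα i) (hβ i) (h3 i).1 (h3 i).2]
      simpa [Finset.sum_congr rfl heq] using h2
  have hsurj : Set.SurjOn (fun (r : Fin M → ℝ) (i : Fin M) => salehAmp (α i) (β i) (r i))
      (feasD M α β lt ε P) (feasC M α β lt ε P) := by
    rintro z ⟨h1, h2, h3⟩
    have hsp := fun i => inv_spec (hα i) (hβ i) (h3 i).1 (h3 i).2
    refine ⟨fun i => salehInv (α i) (β i) (z i), ⟨?_, h2, fun i => ⟨(hsp i).1, (hsp i).2.1⟩⟩, ?_⟩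
    · have heq : ∀ i ∈ Finset.univ,
          lt i * salehAmp (α i) (β i) (salehInv (α i) (β i) (z i)) = lt i * z i :=
        fun i _ => by rw [(hsp i).2.2]
      rw [Finset.sum_congr rfl heq]
      have hnn : 0 ≤ ∑ i, lt i * z i :=
        Finset.sum_nonneg fun i _ => mul_nonneg (hlt i) (h3 i).1
      calc (∑ i, lt i * z i) ^ 2 ≤ Real.sqrt ε ^ 2 := by
            apply pow_le_pow_left₀ hnn h1
        _ = ε := Real.sq_sqrt hε
    · funext i
      exact (hsp i).2.2
  have hinj : Set.InjOn (fun (r : Fin M → ℝ) (i : Fin M) => salehAmp (α i) (β i) (r i))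
      (feasD M α β lt ε P) := by
    intro r1 hr1 r2 hr2 he
    funext i
    have h1 := hr1.2.2 i
    have h2 := hr2.2.2 i
    calc r1 i = salehInv (α i) (β i) (salehAmp (α i) (β i) (r1 i)) :=
          (inv_amp (hα i) (hβ i) h1.1 h1.2).symm
      _ = salehInv (α i) (β i) (salehAmp (α i) (β i) (r2 i)) := by
          have hei : salehAmp (α i) (β i) (r1 i) = salehAmp (α i) (β i) (r2 i) :=
            congrFun he i
          rw [hei]
      _ = r2 i := inv_amp (hα i) (hβ i) h2.1 h2.2
  have hbij : Set.BijOn (fun (r : Fin M → ℝ) (i : Fin M) => salehAmp (α i) (β i) (r i))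
      (feasD M α β lt ε P) (feasC M α β lt ε P) := ⟨hmaps, hinj, hsurj⟩
  refine ⟨?_, hbij, fun r _ => rfl⟩
  have hcomp : (fun r : Fin M → ℝ => ∑ i, ls i * salehAmp (α i) (β i) (r i))
      = (fun z : Fin M → ℝ => ∑ i, ls i * z i) ∘
        (fun (r : Fin M → ℝ) (i : Fin M) => salehAmp (α i) (β i) (r i)) := rfl
  rw [hcomp, Set.image_comp, hbij.image_eq]
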